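/- Assume a refinement step 𝒢 →(P,R) 𝒢' (so 𝒢' = 𝒢 ∪ {P ∩ preflow_F(R)} where R is an entry region of 𝒢 from P). Then every entry region R' of 𝒢' that is not an entry region of 𝒢 satisfies R' ⊆ preflow_F(R). -/

import Mathlib

open Set

/-- Points of `ℝ^n`. -/
abbrev Vec (n : ℕ) := Fin n → ℝ

/-- A (strict or non-strict) affine half-space of `ℝ^ι`. -/
def IsHalfspace {ι : Type} [Fintype ι] (H : Set (ι → ℝ)) : Prop :=
  ∃ (a : ι → ℝ) (b : ℝ), H = {x | (∑ i, a i * x i) < b} ∨ H = {x | (∑ i, a i * x i) ≤ b}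

/-- A convex polyhedron: a finite intersection of half-spaces. -/
def IsConvexPolyhedron {ι : Type} [Fintype ι] (P : Set (ι → ℝ)) : Prop :=
  ∃ (k : ℕ) (Hs : Fin k → Set (ι → ℝ)), (∀ i, IsHalfspace (Hs i)) ∧ P = ⋂ i, Hs i

/-- A polyhedron: a finite union of convex polyhedra. -/
def IsPolyhedron {ι : Type} [Fintype ι] (G : Set (ι → ℝ)) : Prop :=
  ∃ (k : ℕ) (Ps : Fin k → Set (ι → ℝ)), (∀ i, IsConvexPolyhedron (Ps i)) ∧ G = ⋃ i, Ps i

/-- The pre-flow of `G` with respect to `F`: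
`preflow_F(G) = {u | ∃ δ ≥ 0, ∃ c ∈ F, u + δ·c ∈ G}`. -/
def preflow {n : ℕ} (F G : Set (Vec n)) : Set (Vec n) :=
  {u | ∃ δ : ℝ, 0 ≤ δ ∧ ∃ c ∈ F, u + δ • c ∈ G}

/-- The boundary of two sets: `bound(G, G') = (closure G ∩ G') ∪ (G ∩ closure G')`. -/
def bnd {n : ℕ} (G G' : Set (Vec n)) : Set (Vec n) :=
  (closure G ∩ G') ∪ (G ∩ closure G')

/-- `prwa_F(U, V)`: the points from which a piecewise straight-line trajectory with slopes
in `F` reaches `U`, every point along the way (except possibly the final one) lying in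
`(ℝ^n \ V) ∪ U`. -/
def prwa {n : ℕ} (F U V : Set (Vec n)) : Set (Vec n) :=
  {u | ∃ (k : ℕ) (d : Fin k → ℝ) (c : Fin k → Vec n) (p : Fin (k + 1) → Vec n),
    (∀ i, 0 ≤ d i) ∧ (∀ i, c i ∈ F) ∧ p 0 = u ∧
    (∀ i : Fin k, p i.succ = p i.castSucc + d i • c i) ∧
    p (Fin.last k) ∈ U ∧
    ∀ (i : Fin k) (t : ℝ), 0 ≤ t → t ≤ d i →
      p i.castSucc + t • c i = p (Fin.last k) ∨ p i.castSucc + t • c i ∈ Vᶜ ∪ U}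

/-- `rwa_F(U, V)`: the points from which some differentiable trajectory with derivative in
`F` may reach `U` while staying in `(ℝ^n \ V) ∪ U` beforehand. -/
def rwaSet {n : ℕ} (F U V : Set (Vec n)) : Set (Vec n) :=
  {u | ∃ f : ℝ → Vec n, Differentiable ℝ f ∧ f 0 = u ∧ (∀ t, 0 ≤ t → deriv f t ∈ F) ∧
    ∃ δ : ℝ, 0 ≤ δ ∧ f δ ∈ U ∧ ∀ δ', 0 ≤ δ' → δ' < δ → f δ' ∈ Vᶜ ∪ U}

/-- `R` is an entry region of the family `𝒢` from the convex polyhedron `P ∈ 𝒫`: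
a nonempty set `R = bound(P, Q) ∩ preflow_F(Q)` for some `Q ∈ 𝒢`. -/
def IsEntryRegionFrom {n : ℕ} (F : Set (Vec n)) (GG : Set (Set (Vec n)))
    (P R : Set (Vec n)) : Prop :=
  R.Nonempty ∧ ∃ Q ∈ GG, R = bnd P Q ∩ preflow F Q

/-- `R` is an entry region of the family `𝒢` (w.r.t. the family `𝒫`):
a nonempty set `R = bound(P, Q) ∩ preflow_F(Q)` with `P ∈ 𝒫` and `Q ∈ 𝒢`. -/
def IsEntryRegion {n : ℕ} (F : Set (Vec n)) (PP GG : Set (Set (Vec n)))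
    (R : Set (Vec n)) : Prop :=
  ∃ P ∈ PP, IsEntryRegionFrom F GG P R

/-- The refinement step `𝒢 →(P,R) 𝒢'`: `P ∈ 𝒫`, `R` is an entry region of `𝒢` from `P`,
and `𝒢' = 𝒢 ∪ {P ∩ preflow_F(R)}`. -/
def RefStep {n : ℕ} (F : Set (Vec n)) (PP : Set (Set (Vec n)))
    (GG : Set (Set (Vec n))) (P R : Set (Vec n)) (GG' : Set (Set (Vec n))) : Prop :=
  P ∈ PP ∧ IsEntryRegionFrom F GG P R ∧ GG' = GG ∪ {P ∩ preflow F R}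


lemma convexPolyhedron_convex {ι : Type} [Fintype ι] {P : Set (ι → ℝ)}
    (hP : IsConvexPolyhedron P) : Convex ℝ P := by
  obtain ⟨k, Hs, hHs, rfl⟩ := hP
  refine convex_iInter fun i => ?_
  obtain ⟨a, b, h | h⟩ := hHs i
  · rw [h]
    exact convex_halfSpace_lt ⟨fun x y => by simp [Finset.sum_add_distrib, mul_add],
      fun c x => by simp [Finset.mul_sum]; ring_nf; exact Finset.sum_congr rfl fun i _ => by ring⟩ b
  · rw [h]
    exact convex_halfSpace_le ⟨fun x y => by simp [Finset.sum_add_distrib, mul_add],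
      fun c x => by simp [Finset.mul_sum]; ring_nf; exact Finset.sum_congr rfl fun i _ => by ring⟩ b

lemma preflow_preflow_subset {n : ℕ} {F : Set (Vec n)} (hF : Convex ℝ F) (G : Set (Vec n)) :
    preflow F (preflow F G) ⊆ preflow F G := by
  rintro u ⟨δ, hδ, c, hc, δ', hδ', c', hc', h⟩
  rcases eq_or_lt_of_le (add_nonneg hδ hδ' : (0:ℝ) ≤ δ + δ') with h0 | h0
  · have hδ0 : δ = 0 := by linarith [hδ, hδ']
    have hδ'0 : δ' = 0 := by linarith
    refine ⟨0, le_refl 0, c, hc, ?_⟩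
    simpa [hδ0, hδ'0] using h
  · set s := δ + δ'
    refine ⟨s, le_of_lt h0, (δ/s) • c + (δ'/s) • c', hF hc hc' (by positivity) (by positivity)
      (by field_simp; rfl), ?_⟩
    have : s • ((δ/s) • c + (δ'/s) • c') = δ • c + δ' • c' := by
      rw [smul_add, smul_smul, smul_smul]
      rw [mul_div_cancel₀ _ (ne_of_gt h0), mul_div_cancel₀ _ (ne_of_gt h0)]
    rw [this, ← add_assoc]
    exact h

/-- After a refinement step `𝒢 →(P,R) 𝒢'`, every entry region `R'` of
`𝒢'` that is not an entry region of `𝒢` satisfies `R' ⊆ preflow_F(R)`. -/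
theorem new_entry_region_subset {n : ℕ} (F : Set (Vec n)) (hF : IsConvexPolyhedron F)
    (PP : Set (Set (Vec n))) (hPPfin : PP.Finite) (hPP : ∀ P ∈ PP, IsConvexPolyhedron P)
    (GG GG' : Set (Set (Vec n))) (hGGfin : GG.Finite)
    (hGG : ∀ Q ∈ GG, IsConvexPolyhedron Q)
    (P R : Set (Vec n)) (hstep : RefStep F PP GG P R GG')
    (R' : Set (Vec n)) (hR' : IsEntryRegion F PP GG' R')
    (hnot : ¬ IsEntryRegion F PP GG R') :
    R' ⊆ preflow F R := by
  obtain ⟨hPmem, hRent, hGG'⟩ := hstep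
  obtain ⟨P', hP'mem, hne, Q, hQmem, hR'eq⟩ := hR'
  rw [hGG'] at hQmem
  rcases hQmem with hQ | hQ
  · exact absurd ⟨P', hP'mem, hne, Q, hQ, hR'eq⟩ hnot
  · have hQeq : Q = P ∩ preflow F R := hQ
    have hsub : R' ⊆ preflow F (preflow F R) := by
      intro x hx
      rw [hR'eq] at hx
      obtain ⟨δ, hδ, c, hc, hmem⟩ := hx.2
      rw [hQeq] at hmem
      exact ⟨δ, hδ, c, hc, hmem.2⟩
    exact hsub.trans (preflow_preflow_subset (convexPolyhedron_convex hF) R)
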